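/- For every integer n ≥ 1, there exists an injective map from the set of all S(3,{4,6},n) designs on the fixed ground set {1,…,n} into the set of all S(3,{4,6},2n−2) designs on the fixed ground set {1,…,2n−2}. -/

import Mathlib

/-- `B` is an `S(3,{4,6},v)` design on the ground set `Fin v`: every block has
size `4` or `6` and every `3`-element subset lies in exactly one block. -/
def IsS346 (v : ℕ) (B : Finset (Finset (Fin v))) : Prop :=
  (∀ b ∈ B, b.card = 4 ∨ b.card = 6) ∧
  ∀ s : Finset (Fin v), s.card = 3 → ∃! b, b ∈ B ∧ s ⊆ b

/-! ### Finite gadgets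

For each block size we use an explicitly given family of blocks on the doubled
point set (points encoded as `q = 2*j + i` for base `j`, copy `i`); sizes 3 and 5
correspond to blocks through the distinguished point (for size 5 the gadget is a
Steiner quadruple system `SQS(10)`), sizes 4 and 6 to blocks avoiding it. -/

def gadget : ℕ → Finset (Finset ℕ)
  | 3 => (([[0, 1, 2, 3, 4, 5]] : List (List ℕ)).map List.toFinset).toFinset
  | 4 => (([[0, 2, 4, 6], [0, 2, 5, 7], [0, 3, 4, 7], [0, 3, 5, 6], [1, 2, 4, 7], [1, 2, 5, 6], [1, 3, 4, 6], [1, 3, 5, 7]] : List (List ℕ)).map List.toFinset).toFinset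
  | 5 => (([[0, 1, 2, 6], [0, 1, 3, 4], [0, 1, 5, 8], [0, 1, 7, 9], [0, 2, 3, 7], [0, 2, 4, 5], [0, 2, 8, 9], [0, 3, 5, 9], [0, 3, 6, 8], [0, 4, 6, 9], [0, 4, 7, 8], [0, 5, 6, 7], [1, 2, 3, 9], [1, 2, 4, 8], [1, 2, 5, 7], [1, 3, 5, 6], [1, 3, 7, 8], [1, 4, 5, 9], [1, 4, 6, 7], [1, 6, 8, 9], [2, 3, 4, 6], [2, 3, 5, 8], [2, 4, 7, 9], [2, 5, 6, 9], [2, 6, 7, 8], [3, 4, 5, 7], [3, 4, 8, 9], [3, 6, 7, 9], [4, 5, 6, 8], [5, 7, 8, 9]] : List (List ℕ)).map List.toFinset).toFinset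
  | 6 => (([[0, 2, 4, 6, 8, 10], [0, 2, 5, 9], [0, 2, 7, 11], [0, 3, 4, 11], [0, 3, 5, 6], [0, 3, 7, 8], [0, 3, 9, 10], [0, 4, 7, 9], [0, 5, 7, 10], [0, 5, 8, 11], [0, 6, 9, 11], [1, 2, 4, 7], [1, 2, 5, 10], [1, 2, 6, 9], [1, 2, 8, 11], [1, 3, 4, 8], [1, 3, 5, 7, 9, 11], [1, 3, 6, 10], [1, 4, 6, 11], [1, 4, 9, 10], [1, 5, 6, 8], [1, 7, 8, 10], [2, 4, 9, 11], [2, 5, 6, 11], [2, 5, 7, 8], [2, 7, 9, 10], [3, 4, 6, 9], [3, 4, 7, 10], [3, 5, 8, 10], [3, 6, 8, 11], [4, 7, 8, 11], [5, 6, 9, 10]] : List (List ℕ)).map List.toFinset).toFinset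
  | _ => ∅

/-- `cp0 k` is the copy-0 full block. -/
def cp0 (k : ℕ) : Finset ℕ := (Finset.range k).image (fun j => 2*j)

set_option maxRecDepth 1000000
set_option maxHeartbeats 4000000

lemma gadget_wf : ∀ k ∈ ({3,4,5,6} : Finset ℕ), ∀ E ∈ gadget k,
    E ⊆ Finset.range (2*k) ∧ (E.card = 4 ∨ E.card = 6) := by decide

lemma gadget_distinct : ∀ k ∈ ({4,6} : Finset ℕ), ∀ E ∈ gadget k,
    ∀ t ∈ E.powersetCard 3, (t.image (·/2)).card = 3 := by decide

lemma gadget_mixed : ∀ k ∈ ({3,5} : Finset ℕ), ∀ E ∈ gadget k,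
    (∃ q ∈ E, q % 2 = 0) ∧ (∃ q ∈ E, q % 2 = 1) := by decide

lemma gadget_copy0 : ∀ k ∈ ({4,6} : Finset ℕ), ∀ E ∈ gadget k,
    ∀ t ∈ E.powersetCard 3, (∀ q ∈ t, q % 2 = 0) → E = cp0 k := by decide

lemma cp0_mem : ∀ k ∈ ({4,6} : Finset ℕ), cp0 k ∈ gadget k := by decide

lemma gadget_cover : ∀ k ∈ ({3,4,5,6} : Finset ℕ),
    ∀ t ∈ (Finset.range (2*k)).powersetCard 3,
    ((k = 3 ∨ k = 5) ∨ (t.image (·/2)).card = 3) →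
    ((gadget k).filter (fun E => t ⊆ E)).card = 1 := by decide


namespace S346X

variable {m : ℕ}

/-- the `j`-th element (in order) of a finset of `Fin (m+1)`. -/
def elt (c : Finset (Fin (m+1))) (j : ℕ) : Fin (m+1) :=
  if hj : j < c.card then c.orderEmbOfFin rfl ⟨j, hj⟩ else Fin.last m

lemma elt_mem {c : Finset (Fin (m+1))} {j : ℕ} (hj : j < c.card) : elt c j ∈ c := by
  simp only [elt, dif_pos hj]
  exact c.orderEmbOfFin_mem rfl ⟨j, hj⟩

lemma elt_inj {c : Finset (Fin (m+1))} {j j' : ℕ} (hj : j < c.card) (hj' : j' < c.card)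
    (h : elt c j = elt c j') : j = j' := by
  simp only [elt, dif_pos hj, dif_pos hj'] at h
  exact congrArg Fin.val ((c.orderEmbOfFin rfl).injective h)

lemma elt_surj {c : Finset (Fin (m+1))} {a : Fin (m+1)} (ha : a ∈ c) :
    ∃ j, j < c.card ∧ elt c j = a := by
  have h : a ∈ Set.range (c.orderEmbOfFin rfl) := by
    rw [Finset.range_orderEmbOfFin]; exact ha
  obtain ⟨i, hi⟩ := h
  exact ⟨i.1, i.2, by simp only [elt, dif_pos i.2]; rw [← hi]⟩

lemma val_lt_of_ne_last {a : Fin (m+1)} (h : a ≠ Fin.last m) : a.val < m := by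
  have h2 : a.val < m + 1 := a.2
  have h3 : a.val ≠ m := fun hh => h (Fin.ext hh)
  omega

lemma val_lt_of_mem_erase {b : Finset (Fin (m+1))} {a : Fin (m+1)}
    (ha : a ∈ b.erase (Fin.last m)) : a.val < m :=
  val_lt_of_ne_last (Finset.ne_of_mem_erase ha)

/-- the map `(j, i) ↦` point `(j-th element of b∖{∞}, copy i)`, encoded `q = 2j+i`. -/
def theta (b : Finset (Fin (m+1))) (hm : 1 ≤ m) (q : ℕ) : Fin (2*m) :=
  ⟨(elt (b.erase (Fin.last m)) (q/2)).val % m + (q % 2) * m, by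
    have h1 : (elt (b.erase (Fin.last m)) (q/2)).val % m < m := Nat.mod_lt _ (by omega)
    have h3 : q % 2 * m ≤ 1 * m := Nat.mul_le_mul_right m (by omega)
    have h4 : q % 2 * m ≤ m := by simpa using h3
    have := Nat.add_lt_add_of_lt_of_le h1 h4
    simpa [two_mul] using this⟩

lemma theta_val {b : Finset (Fin (m+1))} (hm : 1 ≤ m) {q : ℕ}
    (hq : q < 2 * (b.erase (Fin.last m)).card) :
    (theta b hm q).val = (elt (b.erase (Fin.last m)) (q/2)).val + (q % 2) * m
      ∧ q / 2 < (b.erase (Fin.last m)).card := by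
  have hj : q / 2 < (b.erase (Fin.last m)).card := by omega
  have he : (elt (b.erase (Fin.last m)) (q/2)).val < m := val_lt_of_mem_erase (elt_mem hj)
  exact ⟨by simp [theta, Nat.mod_eq_of_lt he], hj⟩

def Base (y : Fin (2*m)) : Fin (m+1) :=
  ⟨y.val % m, by
    rcases Nat.eq_zero_or_pos m with h | h
    · exact absurd y.2 (by omega)
    · exact Nat.lt_succ_of_lt (Nat.mod_lt _ h)⟩

lemma base_lt (hm : 1 ≤ m) (y : Fin (2*m)) : (Base y).val < m := Nat.mod_lt _ (by omega)

lemma base_copy_eq (y : Fin (2*m)) : (Base y).val + y.val / m * m = y.val :=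
  Nat.mod_add_div' y.val m

lemma copy_lt (y : Fin (2*m)) : y.val / m < 2 := by
  have h : 0 < m := by
    rcases Nat.eq_zero_or_pos m with h | h
    · exact absurd y.2 (by omega)
    · exact h
  exact (Nat.div_lt_iff_lt_mul h).mpr (by have := y.2; omega)

lemma base_ne (y : Fin (2*m)) : Base y ≠ Fin.last m := by
  intro h
  have h0 : 0 < m := by
    rcases Nat.eq_zero_or_pos m with h' | h'
    · exact absurd y.2 (by omega)
    · exact h'
  have h1 : (Base y).val = m := congrArg Fin.val h
  have h2 : (Base y).val < m := Nat.mod_lt _ h0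
  omega

lemma eq_of_base_copy {y y' : Fin (2*m)} (h1 : Base y = Base y')
    (h2 : y.val / m = y'.val / m) : y = y' := by
  apply Fin.ext
  rw [← base_copy_eq y, ← base_copy_eq y', congrArg Fin.val h1, h2]

lemma theta_base {b : Finset (Fin (m+1))} (hm : 1 ≤ m) {q : ℕ}
    (hq : q < 2 * (b.erase (Fin.last m)).card) :
    Base (theta b hm q) = elt (b.erase (Fin.last m)) (q/2)
      ∧ (theta b hm q).val / m = q % 2 := by
  obtain ⟨hv, hj⟩ := theta_val hm hq
  have he : (elt (b.erase (Fin.last m)) (q/2)).val < m := val_lt_of_mem_erase (elt_mem hj)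
  constructor
  · apply Fin.ext
    show (theta b hm q).val % m = _
    rw [hv, Nat.add_mul_mod_self_right, Nat.mod_eq_of_lt he]
  · rw [hv, Nat.add_mul_div_right _ _ (show 0 < m by omega), Nat.div_eq_of_lt he, zero_add]

lemma theta_inj {b : Finset (Fin (m+1))} (hm : 1 ≤ m) {q q' : ℕ}
    (hq : q < 2 * (b.erase (Fin.last m)).card) (hq' : q' < 2 * (b.erase (Fin.last m)).card)
    (h : theta b hm q = theta b hm q') : q = q' := by
  obtain ⟨hb1, hc1⟩ := theta_base hm hq
  obtain ⟨hb2, hc2⟩ := theta_base hm hq'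
  have hbb : elt (b.erase (Fin.last m)) (q/2) = elt (b.erase (Fin.last m)) (q'/2) := by
    rw [← hb1, ← hb2, h]
  have hj := elt_inj (by omega) (by omega) hbb
  have hr : q % 2 = q' % 2 := by rw [← hc1, ← hc2, h]
  omega

def blocksOf (b : Finset (Fin (m+1))) : Finset (Finset (Fin (2*m))) :=
  if hm : 1 ≤ m then (gadget (b.erase (Fin.last m)).card).image (fun E => E.image (theta b hm))
  else ∅

def Phi (B : Finset (Finset (Fin (m+1)))) : Finset (Finset (Fin (2*m))) :=
  B.biUnion blocksOf



def tHat (s : Finset (Fin (2*m))) : Finset (Fin (m+1)) :=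
  if (s.image Base).card = 3 then s.image Base else insert (Fin.last m) (s.image Base)

lemma hm_of_block {B : Finset (Finset (Fin (m+1)))} {b : Finset (Fin (m+1))}
    (hB : IsS346 (m+1) B) (hb : b ∈ B) : 1 ≤ m := by
  have hc := hB.1 b hb
  have hle : b.card ≤ m + 1 := le_trans (Finset.card_le_univ b) (by simp)
  omega

lemma k_mem {B : Finset (Finset (Fin (m+1)))} {b : Finset (Fin (m+1))}
    (hB : IsS346 (m+1) B) (hb : b ∈ B) :
    (b.erase (Fin.last m)).card ∈ ({3,4,5,6} : Finset ℕ)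
    ∧ (Fin.last m ∈ b → (b.erase (Fin.last m)).card ∈ ({3,5} : Finset ℕ))
    ∧ (Fin.last m ∉ b → (b.erase (Fin.last m)).card ∈ ({4,6} : Finset ℕ)) := by
  have hc := hB.1 b hb
  by_cases hL : Fin.last m ∈ b
  · have he : (b.erase (Fin.last m)).card = b.card - 1 := Finset.card_erase_of_mem hL
    refine ⟨?_, fun _ => ?_, fun h => absurd hL h⟩ <;>
      (rcases hc with h | h <;> simp [he, h])
  · have he : b.erase (Fin.last m) = b := Finset.erase_eq_of_notMem hL
    refine ⟨?_, fun h => absurd h hL, fun _ => ?_⟩ <;>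
      (rcases hc with h | h <;> simp [he, h])

lemma tHat_card {s : Finset (Fin (2*m))} (hs : s.card = 3) :
    (tHat s).card = 3 ∧ s.image Base ⊆ tHat s
    ∧ ((s.image Base).card = 2 ∨ (s.image Base).card = 3)
    ∧ ((s.image Base).card = 2 → tHat s = insert (Fin.last m) (s.image Base))
    ∧ ((s.image Base).card = 3 → tHat s = s.image Base) := by
  have hle : (s.image Base).card ≤ 3 := le_trans (Finset.card_image_le) (le_of_eq hs)
  have hge : 2 ≤ (s.image Base).card := by
    by_contra hcon
    push_neg at hcon
    have h1 : (s.image Base).card ≤ 1 := by omega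
    have hall := Finset.card_le_one.mp h1
    obtain ⟨y₁, y₂, y₃, h12, h13, h23, rfl⟩ := Finset.card_eq_three.mp hs
    have hm1 : y₁ ∈ ({y₁, y₂, y₃} : Finset (Fin (2*m))) := by simp
    have hm2 : y₂ ∈ ({y₁, y₂, y₃} : Finset (Fin (2*m))) := by simp
    have hm3 : y₃ ∈ ({y₁, y₂, y₃} : Finset (Fin (2*m))) := by simp
    have hb12 : Base y₁ = Base y₂ :=
      hall _ (Finset.mem_image_of_mem _ hm1) _ (Finset.mem_image_of_mem _ hm2)
    have hb13 : Base y₁ = Base y₃ :=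
      hall _ (Finset.mem_image_of_mem _ hm1) _ (Finset.mem_image_of_mem _ hm3)
    have hb23 : Base y₂ = Base y₃ :=
      hall _ (Finset.mem_image_of_mem _ hm2) _ (Finset.mem_image_of_mem _ hm3)
    have d12 : y₁.val / m ≠ y₂.val / m := fun h => h12 (eq_of_base_copy hb12 h)
    have d13 : y₁.val / m ≠ y₃.val / m := fun h => h13 (eq_of_base_copy hb13 h)
    have d23 : y₂.val / m ≠ y₃.val / m := fun h => h23 (eq_of_base_copy hb23 h)
    have c1 := copy_lt y₁
    have c2 := copy_lt y₂
    have c3 := copy_lt y₃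
    obtain ⟨e1, hg1⟩ : ∃ e, y₁.val / m = e := ⟨_, rfl⟩
    obtain ⟨e2, hg2⟩ : ∃ e, y₂.val / m = e := ⟨_, rfl⟩
    obtain ⟨e3, hg3⟩ : ∃ e, y₃.val / m = e := ⟨_, rfl⟩
    rw [hg1] at c1 d12 d13
    rw [hg2] at c2 d12 d23
    rw [hg3] at c3 d13 d23
    omega
  have hLim : Fin.last m ∉ s.image Base := by
    intro h
    obtain ⟨y, _, hy⟩ := Finset.mem_image.mp h
    exact base_ne y hy
  by_cases h3 : (s.image Base).card = 3
  · exact ⟨by simp [tHat, h3], by simp [tHat, h3], Or.inr h3,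
      fun h2 => by omega, fun _ => by simp [tHat, h3]⟩
  · have h2 : (s.image Base).card = 2 := by omega
    refine ⟨?_, ?_, Or.inl h2, fun _ => by simp [tHat, h3], fun hh => absurd hh h3⟩
    · rw [tHat, if_neg h3, Finset.card_insert_of_notMem hLim, h2]
    · rw [tHat, if_neg h3]
      exact Finset.subset_insert _ _

lemma pull_core {b : Finset (Fin (m+1))} (hm : 1 ≤ m) {F : Finset ℕ} {s : Finset (Fin (2*m))}
    (hFr : F ⊆ Finset.range (2 * (b.erase (Fin.last m)).card))
    (hs : s ⊆ F.image (theta b hm)) :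
    ∃ t', t' ⊆ F ∧ t'.image (theta b hm) = s ∧ t'.card = s.card ∧
      s.image Base = (t'.image (fun q => q / 2)).image (elt (b.erase (Fin.last m))) ∧
      (s.image Base).card = (t'.image (fun q => q / 2)).card ∧
      (∀ q ∈ t', theta b hm q ∈ s) := by
  have himg : (F.filter (fun q => theta b hm q ∈ s)).image (theta b hm) = s := by
    apply Finset.Subset.antisymm
    · intro y hy
      obtain ⟨q, hq, rfl⟩ := Finset.mem_image.mp hy
      exact (Finset.mem_filter.mp hq).2
    · intro y hy
      obtain ⟨q, hqF, rfl⟩ := Finset.mem_image.mp (hs hy)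
      exact Finset.mem_image_of_mem _ (Finset.mem_filter.mpr ⟨hqF, hy⟩)
  have hinj : Set.InjOn (theta b hm) ↑(F.filter (fun q => theta b hm q ∈ s)) := by
    intro q hq q' hq' h
    have h1 := Finset.mem_range.mp (hFr (Finset.filter_subset _ _ (Finset.mem_coe.mp hq)))
    have h2 := Finset.mem_range.mp (hFr (Finset.filter_subset _ _ (Finset.mem_coe.mp hq')))
    exact theta_inj hm h1 h2 h
  have hcard : (F.filter (fun q => theta b hm q ∈ s)).card = s.card := by
    have h := Finset.card_image_of_injOn hinj
    rw [himg] at h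
    exact h.symm
  have hbase : s.image Base
      = ((F.filter (fun q => theta b hm q ∈ s)).image (fun q => q / 2)).image
          (elt (b.erase (Fin.last m))) := by
    have h1 : (F.filter (fun q => theta b hm q ∈ s)).image (Base ∘ theta b hm)
        = (F.filter (fun q => theta b hm q ∈ s)).image
            ((elt (b.erase (Fin.last m))) ∘ (fun q => q / 2)) := by
      apply Finset.image_congr
      intro q hq
      have h1 := Finset.mem_range.mp (hFr (Finset.filter_subset _ _ (Finset.mem_coe.mp hq)))
      exact (theta_base hm h1).1
    calc s.image Base
        = ((F.filter (fun q => theta b hm q ∈ s)).image (theta b hm)).image Base := by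
          rw [himg]
      _ = (F.filter (fun q => theta b hm q ∈ s)).image (Base ∘ theta b hm) := by
          rw [Finset.image_image]
      _ = (F.filter (fun q => theta b hm q ∈ s)).image
            ((elt (b.erase (Fin.last m))) ∘ (fun q => q / 2)) := h1
      _ = ((F.filter (fun q => theta b hm q ∈ s)).image (fun q => q / 2)).image
            (elt (b.erase (Fin.last m))) := by rw [Finset.image_image]
  have hbcard : (s.image Base).card
      = ((F.filter (fun q => theta b hm q ∈ s)).image (fun q => q / 2)).card := by
    rw [hbase]
    apply Finset.card_image_of_injOn
    intro j hj j' hj' h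
    obtain ⟨q, hq, rfl⟩ := Finset.mem_image.mp (Finset.mem_coe.mp hj)
    obtain ⟨q', hq', rfl⟩ := Finset.mem_image.mp (Finset.mem_coe.mp hj')
    have h1 := Finset.mem_range.mp (hFr (Finset.filter_subset _ _ hq))
    have h2 := Finset.mem_range.mp (hFr (Finset.filter_subset _ _ hq'))
    exact elt_inj (by omega) (by omega) h
  exact ⟨F.filter (fun q => theta b hm q ∈ s), Finset.filter_subset _ _, himg, hcard,
    hbase, hbcard, fun q hq => (Finset.mem_filter.mp hq).2⟩

lemma cover_sub {b : Finset (Fin (m+1))} (hm : 1 ≤ m) {s : Finset (Fin (2*m))}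
    (h : s.image Base ⊆ b.erase (Fin.last m)) :
    s ⊆ (Finset.range (2 * (b.erase (Fin.last m)).card)).image (theta b hm) := by
  intro y hy
  have hBy : Base y ∈ b.erase (Fin.last m) := h (Finset.mem_image_of_mem _ hy)
  obtain ⟨j, hj, hje⟩ := elt_surj hBy
  have hcy : y.val / m < 2 := copy_lt y
  obtain ⟨cc, hcc⟩ : ∃ c, y.val / m = c := ⟨_, rfl⟩
  rw [hcc] at hcy
  refine Finset.mem_image.mpr ⟨2*j + cc, Finset.mem_range.mpr (by omega), ?_⟩
  apply Fin.ext
  have hq2 : (2*j + cc)/2 = j := by omega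
  have hqm : (2*j + cc)%2 = cc := by omega
  show (elt (b.erase (Fin.last m)) ((2*j + cc)/2)).val % m + ((2*j + cc)%2) * m = y.val
  rw [hq2, hqm, hje, Nat.mod_eq_of_lt (base_lt hm y), ← hcc]
  exact base_copy_eq y

lemma tHat_sub {B : Finset (Finset (Fin (m+1)))} (hB : IsS346 (m+1) B) (hm : 1 ≤ m)
    {b : Finset (Fin (m+1))} (hbB : b ∈ B) {E : Finset (Fin (2*m))} {s : Finset (Fin (2*m))}
    (hEb : E ∈ blocksOf b) (hsE : s ⊆ E) (hs3 : s.card = 3) :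
    tHat s ⊆ b := by
  rw [blocksOf, dif_pos hm] at hEb
  obtain ⟨F, hF, rfl⟩ := Finset.mem_image.mp hEb
  have hk := k_mem hB hbB
  have hFr := (gadget_wf _ hk.1 F hF).1
  obtain ⟨t', ht'F, himg, hcard, hbase, hbcard, ht's⟩ := pull_core hm hFr hsE
  have hsub : s.image Base ⊆ b.erase (Fin.last m) := by
    rw [hbase]
    intro a ha
    obtain ⟨j, hj, rfl⟩ := Finset.mem_image.mp ha
    obtain ⟨q, hq, rfl⟩ := Finset.mem_image.mp hj
    have h1 := Finset.mem_range.mp (hFr (ht'F hq))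
    exact elt_mem (by omega)
  obtain ⟨h3, hsubT, hor, h2i, h3i⟩ := tHat_card hs3
  rcases hor with h2 | h3'
  · have hL : Fin.last m ∈ b := by
      by_contra hL
      have hk46 := hk.2.2 hL
      have ht'P : t' ∈ F.powersetCard 3 :=
        Finset.mem_powersetCard.mpr ⟨ht'F, by omega⟩
      have := gadget_distinct _ hk46 F hF t' ht'P
      omega
    rw [h2i h2]
    exact Finset.insert_subset hL (hsub.trans (Finset.erase_subset _ _))
  · rw [h3i h3']
    exact hsub.trans (Finset.erase_subset _ _)


lemma cover {B : Finset (Finset (Fin (m+1)))} (hB : IsS346 (m+1) B) :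
    IsS346 (2*m) (Phi B) := by
  constructor
  · intro E hE
    obtain ⟨b, hbB, hEb⟩ := Finset.mem_biUnion.mp hE
    have hm : 1 ≤ m := hm_of_block hB hbB
    rw [blocksOf, dif_pos hm] at hEb
    obtain ⟨F, hF, rfl⟩ := Finset.mem_image.mp hEb
    have hk := (k_mem hB hbB).1
    have hwf := gadget_wf _ hk F hF
    rw [Finset.card_image_of_injOn]
    · exact hwf.2
    · intro q hq q' hq' h
      exact theta_inj hm (Finset.mem_range.mp (hwf.1 hq)) (Finset.mem_range.mp (hwf.1 hq')) h
  · intro s hs3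
    have hm : 1 ≤ m := by
      have := Finset.card_le_univ s
      simp only [Finset.card_univ, Fintype.card_fin] at this
      omega
    obtain ⟨h3, hsubT, hor, h2i, h3i⟩ := tHat_card hs3
    obtain ⟨b, hbT, hbu⟩ := hB.2 (tHat s) h3
    obtain ⟨hbB, hTb⟩ := hbT
    have hk := k_mem hB hbB
    have hbc : s.image Base ⊆ b.erase (Fin.last m) := by
      intro a ha
      obtain ⟨y, hy, rfl⟩ := Finset.mem_image.mp ha
      exact Finset.mem_erase.mpr ⟨base_ne y, hTb (hsubT ha)⟩
    have hscov := cover_sub hm hbc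
    obtain ⟨t', ht'r, himg, hcard, hbase, hbcard, ht's⟩ :=
      pull_core hm (Finset.Subset.refl _) hscov
    have ht'P : t' ∈ (Finset.range (2 * (b.erase (Fin.last m)).card)).powersetCard 3 :=
      Finset.mem_powersetCard.mpr ⟨ht'r, by omega⟩
    have hOK : (((b.erase (Fin.last m)).card = 3 ∨ (b.erase (Fin.last m)).card = 5)
        ∨ (t'.image (fun q => q / 2)).card = 3) := by
      by_cases hL : Fin.last m ∈ b
      · left
        have := hk.2.1 hL
        simp only [Finset.mem_insert, Finset.mem_singleton] at this
        exact this
      · right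
        rw [← hbcard]
        rcases hor with h2 | h3'
        · exact absurd (hTb (by rw [h2i h2]; exact Finset.mem_insert_self _ _)) hL
        · exact h3'
    have hcov := gadget_cover _ hk.1 t' ht'P hOK
    obtain ⟨F₀, hF₀⟩ := Finset.card_eq_one.mp hcov
    have hF₀f : F₀ ∈ (gadget (b.erase (Fin.last m)).card).filter (fun E => t' ⊆ E) := by
      rw [hF₀]; exact Finset.mem_singleton_self F₀
    have hF₀mem := Finset.mem_filter.mp hF₀f
    refine ⟨F₀.image (theta b hm), ⟨?_, ?_⟩, ?_⟩
    · exact Finset.mem_biUnion.mpr ⟨b, hbB,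
        by rw [blocksOf, dif_pos hm]; exact Finset.mem_image_of_mem _ hF₀mem.1⟩
    · rw [← himg]; exact Finset.image_subset_image hF₀mem.2
    · rintro E ⟨hEPhi, hsE⟩
      obtain ⟨b₂, hb₂B, hEb₂⟩ := Finset.mem_biUnion.mp hEPhi
      have hb₂b : b₂ = b := hbu b₂ ⟨hb₂B, tHat_sub hB hm hb₂B hEb₂ hsE hs3⟩
      subst hb₂b
      rw [blocksOf, dif_pos hm] at hEb₂
      obtain ⟨F, hF, rfl⟩ := Finset.mem_image.mp hEb₂
      have hFr := (gadget_wf _ hk.1 F hF).1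
      have ht'F : t' ⊆ F := by
        intro q hq
        have hqs : theta b₂ hm q ∈ s := ht's q hq
        have hq2k := Finset.mem_range.mp (ht'r hq)
        obtain ⟨q', hq'F, hq'e⟩ := Finset.mem_image.mp (hsE hqs)
        have hqq : q' = q := theta_inj hm (Finset.mem_range.mp (hFr hq'F)) hq2k hq'e
        rw [← hqq]; exact hq'F
      have hFf : F ∈ (gadget (b₂.erase (Fin.last m)).card).filter (fun E => t' ⊆ E) :=
        Finset.mem_filter.mpr ⟨hF, ht'F⟩
      rw [hF₀, Finset.mem_singleton] at hFf
      rw [hFf]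


def pz (hm : 1 ≤ m) (a : Fin (m+1)) : Fin (2*m) :=
  ⟨a.val % m, lt_of_lt_of_le (Nat.mod_lt _ (by omega)) (by omega)⟩

lemma pz_val (hm : 1 ≤ m) {a : Fin (m+1)} (ha : a.val < m) : (pz hm a).val = a.val :=
  Nat.mod_eq_of_lt ha

lemma base_pz (hm : 1 ≤ m) {a : Fin (m+1)} (ha : a.val < m) : Base (pz hm a) = a := by
  apply Fin.ext
  show (pz hm a).val % m = a.val
  rw [pz_val hm ha, Nat.mod_eq_of_lt ha]

lemma pz_ne (hm : 1 ≤ m) {a a' : Fin (m+1)} (ha : a.val < m) (ha' : a'.val < m)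
    (h : a ≠ a') : pz hm a ≠ pz hm a' := by
  intro hh
  apply h
  apply Fin.ext
  have h2 := congrArg Fin.val hh
  rw [pz_val hm ha, pz_val hm ha'] at h2
  exact h2

lemma char {B : Finset (Finset (Fin (m+1)))} (hB : IsS346 (m+1) B) (hm : 1 ≤ m)
    {b : Finset (Fin (m+1))} (hbB : b ∈ B) (hL : Fin.last m ∈ b)
    {x y : Fin (m+1)} (hx : x ∈ b.erase (Fin.last m)) (hy : y ∈ b.erase (Fin.last m))
    (hxy : x ≠ y) {z : Fin (m+1)} (hzL : z ≠ Fin.last m) (hzx : z ≠ x) (hzy : z ≠ y) :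
    (z ∈ b ↔ ∃ E, E ∈ Phi B ∧ ({pz hm x, pz hm y, pz hm z} : Finset (Fin (2*m))) ⊆ E
      ∧ ¬ (∀ u ∈ E, u.val < m)) := by
  have hxL : x ≠ Fin.last m := Finset.ne_of_mem_erase hx
  have hyL : y ≠ Fin.last m := Finset.ne_of_mem_erase hy
  have xv : x.val < m := val_lt_of_ne_last hxL
  have yv : y.val < m := val_lt_of_ne_last hyL
  have zv : z.val < m := val_lt_of_ne_last hzL
  have hsz3 : ({pz hm x, pz hm y, pz hm z} : Finset (Fin (2*m))).card = 3 :=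
    Finset.card_eq_three.mpr ⟨_, _, _, pz_ne hm xv yv hxy, pz_ne hm xv zv (Ne.symm hzx),
      pz_ne hm yv zv (Ne.symm hzy), rfl⟩
  have himgB : ({pz hm x, pz hm y, pz hm z} : Finset (Fin (2*m))).image Base
      = ({x, y, z} : Finset (Fin (m+1))) := by
    rw [Finset.image_insert, Finset.image_insert, Finset.image_singleton,
      base_pz hm xv, base_pz hm yv, base_pz hm zv]
  have hxyz3 : ({x, y, z} : Finset (Fin (m+1))).card = 3 :=
    Finset.card_eq_three.mpr ⟨x, y, z, hxy, Ne.symm hzx, Ne.symm hzy, rfl⟩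
  have hT : tHat ({pz hm x, pz hm y, pz hm z} : Finset (Fin (2*m))) = {x, y, z} := by
    have h := (tHat_card hsz3).2.2.2.2 (by rw [himgB]; exact hxyz3)
    rw [h, himgB]
  constructor
  · intro hzb
    have hxyzb : ({x, y, z} : Finset (Fin (m+1))) ⊆ b := by
      rw [Finset.insert_subset_iff, Finset.insert_subset_iff, Finset.singleton_subset_iff]
      exact ⟨Finset.mem_of_mem_erase hx, Finset.mem_of_mem_erase hy, hzb⟩
    obtain ⟨E, ⟨hEPhi, hszE⟩, _⟩ := (cover hB).2 _ hsz3
    refine ⟨E, hEPhi, hszE, ?_⟩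
    obtain ⟨b₂, hb₂B, hEb₂⟩ := Finset.mem_biUnion.mp hEPhi
    have hsub : tHat _ ⊆ b₂ := tHat_sub hB hm hb₂B hEb₂ hszE hsz3
    rw [hT] at hsub
    obtain ⟨b₀, _, hu⟩ := hB.2 _ hxyz3
    have hb₂b : b₂ = b := by rw [hu b₂ ⟨hb₂B, hsub⟩, ← hu b ⟨hbB, hxyzb⟩]
    rw [hb₂b] at hEb₂
    rw [blocksOf, dif_pos hm] at hEb₂
    obtain ⟨F, hF, hFE⟩ := Finset.mem_image.mp hEb₂
    have hk35 := (k_mem hB hbB).2.1 hL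
    have hk := (k_mem hB hbB).1
    obtain ⟨_, q, hqF, hq1⟩ := gadget_mixed _ hk35 F hF
    intro hall
    have hFr := (gadget_wf _ hk F hF).1
    have hq2k := Finset.mem_range.mp (hFr hqF)
    have hu' : theta b hm q ∈ E := by rw [← hFE]; exact Finset.mem_image_of_mem _ hqF
    have hlt := hall _ hu'
    have hv := (theta_val hm hq2k).1
    rw [hq1] at hv
    omega
  · rintro ⟨E, hEPhi, hszE, hmix⟩
    obtain ⟨b₂, hb₂B, hEb₂⟩ := Finset.mem_biUnion.mp hEPhi
    have hsub : tHat _ ⊆ b₂ := tHat_sub hB hm hb₂B hEb₂ hszE hsz3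
    rw [hT] at hsub
    by_contra hzb
    have hLb₂ : Fin.last m ∉ b₂ := by
      intro hL₂
      have hcard : ({x, y, Fin.last m} : Finset (Fin (m+1))).card = 3 :=
        Finset.card_eq_three.mpr ⟨x, y, _, hxy, hxL, hyL, rfl⟩
      obtain ⟨b₀, _, hu⟩ := hB.2 _ hcard
      have hs1 : ({x, y, Fin.last m} : Finset (Fin (m+1))) ⊆ b₂ := by
        rw [Finset.insert_subset_iff, Finset.insert_subset_iff, Finset.singleton_subset_iff]
        exact ⟨hsub (by simp), hsub (by simp), hL₂⟩
      have hs2 : ({x, y, Fin.last m} : Finset (Fin (m+1))) ⊆ b := by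
        rw [Finset.insert_subset_iff, Finset.insert_subset_iff, Finset.singleton_subset_iff]
        exact ⟨Finset.mem_of_mem_erase hx, Finset.mem_of_mem_erase hy, hL⟩
      have hb₂b : b₂ = b := by rw [hu b₂ ⟨hb₂B, hs1⟩, ← hu b ⟨hbB, hs2⟩]
      exact hzb (hb₂b ▸ hsub (by simp))
    have hk46 := (k_mem hB hb₂B).2.2 hLb₂
    have hk := (k_mem hB hb₂B).1
    rw [blocksOf, dif_pos hm] at hEb₂
    obtain ⟨F, hF, hFE⟩ := Finset.mem_image.mp hEb₂
    have hFr := (gadget_wf _ hk F hF).1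
    rw [← hFE] at hszE
    obtain ⟨t', ht'F, himg, hcard', hbase', hbcard', ht's⟩ := pull_core hm hFr hszE
    have hev : ∀ q ∈ t', q % 2 = 0 := by
      intro q hq
      have hqs := ht's q hq
      have hq2k := Finset.mem_range.mp (hFr (ht'F hq))
      have hv := (theta_val hm hq2k).1
      have hlt : (theta b₂ hm q).val < m := by
        simp only [Finset.mem_insert, Finset.mem_singleton] at hqs
        rcases hqs with h | h | h
        · rw [h, pz_val hm xv]; exact xv
        · rw [h, pz_val hm yv]; exact yv
        · rw [h, pz_val hm zv]; exact zv
      rcases Nat.mod_two_eq_zero_or_one q with h0 | h1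
      · exact h0
      · rw [h1] at hv; omega
    have ht'P : t' ∈ F.powersetCard 3 := Finset.mem_powersetCard.mpr ⟨ht'F, by
      rw [hcard', hsz3]⟩
    have hFcp := gadget_copy0 _ hk46 F hF t' ht'P hev
    apply hmix
    intro u hu
    rw [← hFE] at hu
    obtain ⟨q, hqF, rfl⟩ := Finset.mem_image.mp hu
    rw [hFcp] at hqF
    obtain ⟨j, hj, rfl⟩ := Finset.mem_image.mp hqF
    have hj' := Finset.mem_range.mp hj
    have hkval : (b₂.erase (Fin.last m)).card = (b₂.erase (Fin.last m)).card := rfl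
    have hk2 : (2*j : ℕ) < 2 * (b₂.erase (Fin.last m)).card := by
      have : cp0 (b₂.erase (Fin.last m)).card = F := hFcp.symm
      omega
    have hv := (theta_val hm hk2).1
    have hmod : (2*j) % 2 = 0 := by omega
    have hdiv : (2*j) / 2 = j := by omega
    rw [hmod, hdiv] at hv
    have hem := val_lt_of_mem_erase (elt_mem (show j < (b₂.erase (Fin.last m)).card by omega))
    omega


lemma phi_mem {B B' : Finset (Finset (Fin (m+1)))} (hB : IsS346 (m+1) B)
    (hB' : IsS346 (m+1) B') (hPhi : Phi B = Phi B')
    {b : Finset (Fin (m+1))} (hbB : b ∈ B) : b ∈ B' := by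
  have hc := hB.1 b hbB
  have hm : 1 ≤ m := hm_of_block hB hbB
  by_cases hL : Fin.last m ∈ b
  · have hk35 := (k_mem hB hbB).2.1 hL
    have h1k : 1 < (b.erase (Fin.last m)).card := by
      simp only [Finset.mem_insert, Finset.mem_singleton] at hk35; omega
    obtain ⟨x, hx, y, hy, hxy⟩ := Finset.one_lt_card.mp h1k
    have hxL : x ≠ Fin.last m := Finset.ne_of_mem_erase hx
    have hyL : y ≠ Fin.last m := Finset.ne_of_mem_erase hy
    have hT3 : ({x, y, Fin.last m} : Finset (Fin (m+1))).card = 3 :=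
      Finset.card_eq_three.mpr ⟨x, y, _, hxy, hxL, hyL, rfl⟩
    obtain ⟨b', ⟨hb'B', hTb'⟩, _⟩ := hB'.2 _ hT3
    have hLb' : Fin.last m ∈ b' := hTb' (by simp)
    have hxb : x ∈ b := Finset.mem_of_mem_erase hx
    have hyb : y ∈ b := Finset.mem_of_mem_erase hy
    have hxb' : x ∈ b'.erase (Fin.last m) :=
      Finset.mem_erase.mpr ⟨hxL, hTb' (by simp)⟩
    have hyb' : y ∈ b'.erase (Fin.last m) :=
      Finset.mem_erase.mpr ⟨hyL, hTb' (by simp)⟩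
    suffices h : b = b' by rw [h]; exact hb'B'
    ext z
    by_cases hzL : z = Fin.last m
    · subst hzL; simp [hL, hLb']
    by_cases hzx : z = x
    · subst hzx; simp [hxb, Finset.mem_of_mem_erase hxb']
    by_cases hzy : z = y
    · subst hzy; simp [hyb, Finset.mem_of_mem_erase hyb']
    rw [char hB hm hbB hL hx hy hxy hzL hzx hzy,
        char hB' hm hb'B' hLb' hxb' hyb' hxy hzL hzx hzy, hPhi]
  · have hk46 := (k_mem hB hbB).2.2 hL
    have hk := (k_mem hB hbB).1
    have hcp := cp0_mem _ hk46
    have hE'B : (cp0 (b.erase (Fin.last m)).card).image (theta b hm) ∈ Phi B :=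
      Finset.mem_biUnion.mpr ⟨b, hbB, by
        rw [blocksOf, dif_pos hm]; exact Finset.mem_image_of_mem _ hcp⟩
    rw [hPhi] at hE'B
    obtain ⟨b₂, hb₂B', hEb₂⟩ := Finset.mem_biUnion.mp hE'B
    rw [blocksOf, dif_pos hm] at hEb₂
    obtain ⟨F, hF, hFE⟩ := Finset.mem_image.mp hEb₂
    have hk₂ := (k_mem hB' hb₂B').1
    have hFr := (gadget_wf _ hk₂ F hF).1
    have hE'lt : ∀ u ∈ (cp0 (b.erase (Fin.last m)).card).image (theta b hm), u.val < m := by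
      intro u hu
      obtain ⟨q, hq, rfl⟩ := Finset.mem_image.mp hu
      obtain ⟨j, hj, rfl⟩ := Finset.mem_image.mp hq
      have hj' := Finset.mem_range.mp hj
      have hq2k : (2*j : ℕ) < 2 * (b.erase (Fin.last m)).card := by omega
      have hv := (theta_val hm hq2k).1
      have hmod : (2*j) % 2 = 0 := by omega
      have hdiv : (2*j) / 2 = j := by omega
      rw [hmod, hdiv] at hv
      have hem := val_lt_of_mem_erase
        (elt_mem (show j < (b.erase (Fin.last m)).card by omega))
      omega
    have hev : ∀ q ∈ F, q % 2 = 0 := by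
      intro q hq
      have h1 : theta b₂ hm q ∈ (cp0 (b.erase (Fin.last m)).card).image (theta b hm) := by
        rw [← hFE]; exact Finset.mem_image_of_mem _ hq
      have hlt := hE'lt _ h1
      have hq2k := Finset.mem_range.mp (hFr hq)
      have hv := (theta_val hm hq2k).1
      rcases Nat.mod_two_eq_zero_or_one q with h0 | h1'
      · exact h0
      · rw [h1'] at hv; omega
    have hk₂46 : (b₂.erase (Fin.last m)).card ∈ ({4,6} : Finset ℕ) := by
      by_contra hcon
      have h35 : (b₂.erase (Fin.last m)).card ∈ ({3,5} : Finset ℕ) := by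
        simp only [Finset.mem_insert, Finset.mem_singleton] at hk₂ hcon ⊢; omega
      obtain ⟨_, q, hqF, hq1⟩ := gadget_mixed _ h35 F hF
      rw [hev q hqF] at hq1
      exact absurd hq1 (by omega)
    have hLb₂ : Fin.last m ∉ b₂ := by
      intro hL₂
      have h35 := (k_mem hB' hb₂B').2.1 hL₂
      simp only [Finset.mem_insert, Finset.mem_singleton] at h35 hk₂46; omega
    have hcard3 : 3 ≤ F.card := by
      rcases (gadget_wf _ hk₂ F hF).2 with h | h <;> omega
    obtain ⟨t, htF, ht3⟩ := Finset.exists_subset_card_eq hcard3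
    have hFcp := gadget_copy0 _ hk₂46 F hF t (Finset.mem_powersetCard.mpr ⟨htF, ht3⟩)
      (fun q hq => hev q (htF hq))
    suffices h : b = b₂ by rw [h]; exact hb₂B'
    have key : ∀ (c₁ c₂ : Finset (Fin (m+1))), Fin.last m ∉ c₁ →
        (cp0 (c₁.erase (Fin.last m)).card).image (theta c₁ hm)
          = (cp0 (c₂.erase (Fin.last m)).card).image (theta c₂ hm) →
        c₁ ⊆ c₂ := by
      intro c₁ c₂ hL₁ heq a ha
      have haL : a ≠ Fin.last m := fun hh => hL₁ (hh ▸ ha)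
      have hae : a ∈ c₁.erase (Fin.last m) := Finset.mem_erase.mpr ⟨haL, ha⟩
      obtain ⟨j, hj, hje⟩ := elt_surj hae
      have hq : (2*j : ℕ) ∈ cp0 (c₁.erase (Fin.last m)).card :=
        Finset.mem_image.mpr ⟨j, Finset.mem_range.mpr hj, rfl⟩
      have hu : theta c₁ hm (2*j)
          ∈ (cp0 (c₂.erase (Fin.last m)).card).image (theta c₂ hm) := by
        rw [← heq]; exact Finset.mem_image_of_mem _ hq
      obtain ⟨q₂, hq₂, he⟩ := Finset.mem_image.mp hu
      obtain ⟨j₂, hj₂, rfl⟩ := Finset.mem_image.mp hq₂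
      have hj₂' := Finset.mem_range.mp hj₂
      have h1 : (2*j : ℕ) < 2 * (c₁.erase (Fin.last m)).card := by omega
      have h2 : (2*j₂ : ℕ) < 2 * (c₂.erase (Fin.last m)).card := by omega
      have hv1 := (theta_val hm h1).1
      have hv2 := (theta_val hm h2).1
      have hd1 : (2*j)/2 = j := by omega
      have hm1 : (2*j)%2 = 0 := by omega
      have hd2 : (2*j₂)/2 = j₂ := by omega
      have hm2 : (2*j₂)%2 = 0 := by omega
      rw [hd1, hm1] at hv1
      rw [hd2, hm2] at hv2
      have hvv := congrArg Fin.val he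
      have hval : (elt (c₂.erase (Fin.last m)) j₂).val
          = (elt (c₁.erase (Fin.last m)) j).val := by omega
      have hfin : elt (c₂.erase (Fin.last m)) j₂ = a := by
        apply Fin.ext
        rw [hval, congrArg Fin.val hje]
      exact Finset.mem_of_mem_erase (hfin ▸ elt_mem hj₂')
    have heq1 : (cp0 (b.erase (Fin.last m)).card).image (theta b hm)
        = (cp0 (b₂.erase (Fin.last m)).card).image (theta b₂ hm) := by
      rw [← hFE, hFcp]
    exact Finset.Subset.antisymm (key b b₂ hL heq1) (key b₂ b hLb₂ heq1.symm)

lemma main (m : ℕ) : ∃ φ : {B : Finset (Finset (Fin (m+1))) // IsS346 (m+1) B} →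
    {B : Finset (Finset (Fin (2*m))) // IsS346 (2*m) B}, Function.Injective φ := by
  refine ⟨fun X => ⟨Phi X.1, cover X.2⟩, ?_⟩
  rintro ⟨B, hB⟩ ⟨B', hB'⟩ h
  have hP : Phi B = Phi B' := congrArg Subtype.val h
  apply Subtype.ext
  ext b
  exact ⟨fun hb => phi_mem hB hB' hP hb, fun hb => phi_mem hB' hB hP.symm hb⟩


end S346X

/-- There is an injection from the set of `S(3,{4,6},n)` designs on `Fin n` into
the set of `S(3,{4,6},2n-2)` designs on `Fin (2n-2)`. -/
theorem s346_injection (n : ℕ) (hn : 1 ≤ n) :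
    ∃ φ : {B : Finset (Finset (Fin n)) // IsS346 n B} →
          {B : Finset (Finset (Fin (2 * n - 2))) // IsS346 (2 * n - 2) B},
      Function.Injective φ := by
  obtain ⟨m, rfl⟩ : ∃ m, n = m + 1 := ⟨n - 1, by omega⟩
  have h : 2 * (m + 1) - 2 = 2 * m := by omega
  rw [h]
  exact S346X.main m
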